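/- Let r ≥ 2 be an integer and b an integer coprime to r, and write σ(i) = [b·i]_r·(r − [b·i]_r)/(2r) ∈ ℚ. Then in ℚ⟦t⟧: ∑_{n≥0} ( −n·(r²−1)/(12r) − [−n]_r·(r²−1)/(12r) + ∑_{j=1}^{[−n]_r − 1} σ(j) )·t^n = −(1−t)⁻¹·(1−t^r)⁻¹·∑_{i=1}^{r−1} σ(i)·t^i, where (1−t)⁻¹ and (1−t^r)⁻¹ denote the inverses of these units in ℚ⟦t⟧. -/

import Mathlib

open PowerSeries

private lemma IccZ_insert (a c : ℤ) (h : a ≤ c) :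
    Finset.Icc a c = insert c (Finset.Icc a (c - 1)) := by
  ext x; simp only [Finset.mem_Icc, Finset.mem_insert]; omega

private lemma sumIcc_id (N : ℕ) :
    ∑ k ∈ Finset.Icc (1 : ℤ) (N : ℤ), (k : ℚ) = (N : ℚ) * ((N : ℚ) + 1) / 2 := by
  induction N with
  | zero => simp
  | succ n ih =>
    rw [show ((n + 1 : ℕ) : ℤ) = (n : ℤ) + 1 by push_cast; ring,
      IccZ_insert 1 ((n : ℤ) + 1) (by omega),
      Finset.sum_insert (by simp only [Finset.mem_Icc]; omega)]
    rw [show (n : ℤ) + 1 - 1 = (n : ℤ) from by ring, ih]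
    push_cast; ring

private lemma sumIcc_sq (N : ℕ) :
    ∑ k ∈ Finset.Icc (1 : ℤ) (N : ℤ), (k : ℚ) ^ 2
      = (N : ℚ) * ((N : ℚ) + 1) * (2 * (N : ℚ) + 1) / 6 := by
  induction N with
  | zero => simp
  | succ n ih =>
    rw [show ((n + 1 : ℕ) : ℤ) = (n : ℤ) + 1 by push_cast; ring,
      IccZ_insert 1 ((n : ℤ) + 1) (by omega),
      Finset.sum_insert (by simp only [Finset.mem_Icc]; omega)]
    rw [show (n : ℤ) + 1 - 1 = (n : ℤ) from by ring, ih]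
    push_cast; ring

private lemma gsum (r : ℕ) (hr : 2 ≤ r) :
    ∑ k ∈ Finset.Icc (1 : ℤ) ((r : ℤ) - 1), (k : ℚ) * ((r : ℚ) - (k : ℚ)) / (2 * (r : ℚ))
      = ((r : ℚ) ^ 2 - 1) / 12 := by
  have hrQ : (r : ℚ) ≠ 0 := Nat.cast_ne_zero.mpr (by omega)
  have hcast : ((r : ℤ) - 1) = ((r - 1 : ℕ) : ℤ) := by omega
  have hsplit : ∀ k : ℤ, (k : ℚ) * ((r : ℚ) - (k : ℚ)) / (2 * (r : ℚ))
      = ((r : ℚ) / (2 * (r : ℚ))) * (k : ℚ) - (1 / (2 * (r : ℚ))) * (k : ℚ) ^ 2 := by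
    intro k; field_simp
  rw [hcast, Finset.sum_congr rfl fun k _ => hsplit k, Finset.sum_sub_distrib,
    ← Finset.mul_sum, ← Finset.mul_sum, sumIcc_id, sumIcc_sq]
  have hc : ((r - 1 : ℕ) : ℚ) = (r : ℚ) - 1 := by
    push_cast [Nat.cast_sub (by omega : 1 ≤ r)]; ring
  rw [hc]; field_simp; ring

private lemma sigma_emod (r : ℕ) (b : ℤ) (σ : ℤ → ℚ)
    (hσ : ∀ i : ℤ, σ i =
      (((b * i) % (r : ℤ) : ℤ) : ℚ) * ((r : ℚ) - (((b * i) % (r : ℤ) : ℤ) : ℚ)) / (2 * r))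
    (i : ℤ) : σ (i % (r : ℤ)) = σ i := by
  have h : b * (i % (r : ℤ)) % (r : ℤ) = b * i % (r : ℤ) := by
    rw [Int.mul_emod, Int.emod_emod_of_dvd _ dvd_rfl, ← Int.mul_emod]
  rw [hσ, hσ, h]

private lemma sigma_zero (r : ℕ) (b : ℤ) (σ : ℤ → ℚ)
    (hσ : ∀ i : ℤ, σ i =
      (((b * i) % (r : ℤ) : ℤ) : ℚ) * ((r : ℚ) - (((b * i) % (r : ℤ) : ℤ) : ℚ)) / (2 * r)) :
    σ 0 = 0 := by
  rw [hσ]; simp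

private lemma sigma_neg (r : ℕ) (hr : 2 ≤ r) (b : ℤ) (σ : ℤ → ℚ)
    (hσ : ∀ i : ℤ, σ i =
      (((b * i) % (r : ℤ) : ℤ) : ℚ) * ((r : ℚ) - (((b * i) % (r : ℤ) : ℤ) : ℚ)) / (2 * r))
    (i : ℤ) : σ (-i) = σ i := by
  have hr0 : (0 : ℤ) < (r : ℤ) := by exact_mod_cast Nat.pos_of_ne_zero (by omega)
  set k := b * i % (r : ℤ) with hk
  have hk0 : 0 ≤ k := Int.emod_nonneg _ (by omega)
  have hkr : k < (r : ℤ) := Int.emod_lt_of_pos _ hr0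
  have hneg : b * (-i) % (r : ℤ) = (-(b * i)) % (r : ℤ) := by rw [mul_neg]
  by_cases h0 : k = 0
  · have hd : (r : ℤ) ∣ b * i := Int.dvd_of_emod_eq_zero h0
    have h1 : (-(b * i)) % (r : ℤ) = 0 := Int.emod_eq_zero_of_dvd (dvd_neg.mpr hd)
    rw [hσ, hσ, hneg, h1, ← hk, h0]
  · have h1 : (-(b * i)) % (r : ℤ) = (r : ℤ) - k := by
      have h2 : (-(b * i)) % (r : ℤ) = (0 - k) % (r : ℤ) := by
        rw [zero_sub, hk]; exact (Int.ModEq.neg (Int.mod_modEq (b * i) r)).symm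
      have h3 : ((r : ℤ) - k) % (r : ℤ) = (0 - k) % (r : ℤ) := by
        rw [Int.sub_emod, Int.emod_self, Int.emod_eq_of_lt hk0 hkr]
      rw [h2, ← h3, Int.emod_eq_of_lt (by omega) (by omega)]
    rw [hσ, hσ, hneg, h1, ← hk]
    push_cast
    ring

private lemma sigma_sum (r : ℕ) (hr : 2 ≤ r) (b : ℤ) (σ : ℤ → ℚ) (hb : IsCoprime b (r : ℤ))
    (hσ : ∀ i : ℤ, σ i =
      (((b * i) % (r : ℤ) : ℤ) : ℚ) * ((r : ℚ) - (((b * i) % (r : ℤ) : ℤ) : ℚ)) / (2 * r)) :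
    ∑ j ∈ Finset.Icc (1 : ℤ) ((r : ℤ) - 1), σ j = ((r : ℚ) ^ 2 - 1) / 12 := by
  obtain ⟨u, v, huv⟩ := hb
  have hr0 : (0 : ℤ) < (r : ℤ) := by exact_mod_cast Nat.pos_of_ne_zero (by omega)
  have hub : u * b = 1 - v * (r : ℤ) := by linarith
  have hbC : IsCoprime b (r : ℤ) := ⟨u, v, huv⟩
  have huC : IsCoprime u (r : ℤ) := ⟨b, v, by rw [mul_comm]; exact huv⟩
  have hmem : ∀ c : ℤ, IsCoprime c (r : ℤ) → ∀ j ∈ Finset.Icc (1 : ℤ) ((r : ℤ) - 1),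
      c * j % (r : ℤ) ∈ Finset.Icc (1 : ℤ) ((r : ℤ) - 1) := by
    intro c hc j hj
    rw [Finset.mem_Icc] at hj ⊢
    have h1 : 0 ≤ c * j % (r : ℤ) := Int.emod_nonneg _ (by omega)
    have h2 : c * j % (r : ℤ) < (r : ℤ) := Int.emod_lt_of_pos _ hr0
    refine ⟨?_, by omega⟩
    by_contra hz
    have hz0 : c * j % (r : ℤ) = 0 := by omega
    have hd : (r : ℤ) ∣ c * j := Int.dvd_of_emod_eq_zero hz0
    have hd2 : (r : ℤ) ∣ j := (hc.symm).dvd_of_dvd_mul_left hd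
    have := Int.le_of_dvd (by omega) hd2
    omega
  rw [← gsum r hr]
  refine Finset.sum_nbij' (fun j => b * j % (r : ℤ)) (fun k => u * k % (r : ℤ))
    (hmem b hbC) (hmem u huC) ?_ ?_ ?_
  · intro j hj
    rw [Finset.mem_Icc] at hj
    show u * (b * j % (r : ℤ)) % (r : ℤ) = j
    rw [Int.mul_emod, Int.emod_emod_of_dvd _ dvd_rfl, ← Int.mul_emod, ← mul_assoc, hub,
      show (1 - v * (r : ℤ)) * j = j + (-(v * j)) * (r : ℤ) from by ring,
      Int.add_mul_emod_self_right, Int.emod_eq_of_lt (by omega) (by omega)]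
  · intro k hk
    rw [Finset.mem_Icc] at hk
    show b * (u * k % (r : ℤ)) % (r : ℤ) = k
    rw [Int.mul_emod, Int.emod_emod_of_dvd _ dvd_rfl, ← Int.mul_emod, ← mul_assoc,
      show b * u = 1 - v * (r : ℤ) from by linarith,
      show (1 - v * (r : ℤ)) * k = k + (-(v * k)) * (r : ℤ) from by ring,
      Int.add_mul_emod_self_right, Int.emod_eq_of_lt (by omega) (by omega)]
  · intro j hj
    rw [hσ j]

private noncomputable def fA (r : ℕ) (σ : ℤ → ℚ) (n : ℕ) : ℚ :=
  -(n : ℚ) * ((r : ℚ) ^ 2 - 1) / (12 * r)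
    - ((((-(n : ℤ)) % (r : ℤ)) : ℤ) : ℚ) * ((r : ℚ) ^ 2 - 1) / (12 * r)
    + ∑ j ∈ Finset.Icc (1 : ℤ) ((-(n : ℤ)) % (r : ℤ) - 1), σ j

private lemma fA_zero (r : ℕ) (σ : ℤ → ℚ) : fA r σ 0 = 0 := by
  simp only [fA, Nat.cast_zero, neg_zero, Int.zero_emod, Int.cast_zero, zero_mul, zero_div,
    zero_sub, sub_zero]
  rw [Finset.Icc_eq_empty (by norm_num : ¬(1 : ℤ) ≤ -1)]
  simp

private lemma fA_diff (r : ℕ) (hr : 2 ≤ r) (b : ℤ) (hb : IsCoprime b (r : ℤ)) (σ : ℤ → ℚ)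
    (hσ : ∀ i : ℤ, σ i =
      (((b * i) % (r : ℤ) : ℤ) : ℚ) * ((r : ℚ) - (((b * i) % (r : ℤ) : ℤ) : ℚ)) / (2 * r))
    (n : ℕ) :
    fA r σ (n + 1) - fA r σ n = -σ ((n + 1 : ℕ) : ℤ) := by
  have hr0 : (0 : ℤ) < (r : ℤ) := by exact_mod_cast Nat.pos_of_ne_zero (by omega)
  have hrQ : (r : ℚ) ≠ 0 := Nat.cast_ne_zero.mpr (by omega)
  set m₁ := (-(n : ℤ)) % (r : ℤ) with hm₁
  set m₂ := (-((n + 1 : ℕ) : ℤ)) % (r : ℤ) with hm₂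
  have hm₁0 : 0 ≤ m₁ := Int.emod_nonneg _ (by omega)
  have hm₁r : m₁ < (r : ℤ) := Int.emod_lt_of_pos _ hr0
  have hend : σ m₂ = σ ((n + 1 : ℕ) : ℤ) := by
    rw [hm₂, sigma_emod r b σ hσ, sigma_neg r hr b σ hσ]
  rw [← hend]
  by_cases hpos : 1 ≤ m₁
  · have hm2 : m₂ = m₁ - 1 := by
      rw [hm₂, show (-((n + 1 : ℕ) : ℤ)) = (-(n : ℤ)) - 1 by push_cast; ring,
        Int.sub_emod, ← hm₁,
        show (1 : ℤ) % (r : ℤ) = 1 from Int.emod_eq_of_lt (by omega) (by omega),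
        Int.emod_eq_of_lt (by omega) (by omega)]
    have hsum : ∑ j ∈ Finset.Icc (1 : ℤ) (m₁ - 1), σ j
        = ∑ j ∈ Finset.Icc (1 : ℤ) (m₂ - 1), σ j + σ m₂ := by
      by_cases hz : m₂ = 0
      · rw [hz, sigma_zero r b σ hσ, Finset.Icc_eq_empty (by omega),
          Finset.Icc_eq_empty (by omega)]
        simp
      · rw [show m₁ - 1 = m₂ from hm2.symm, IccZ_insert 1 m₂ (by omega),
          Finset.sum_insert (by simp only [Finset.mem_Icc]; omega)]
        ring
    unfold fA
    rw [← hm₁, ← hm₂, hsum, hm2]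
    push_cast
    ring
  · have hm1z : m₁ = 0 := by omega
    obtain ⟨q, hq⟩ : (r : ℤ) ∣ (n : ℤ) :=
      dvd_neg.mp (Int.dvd_of_emod_eq_zero hm1z)
    have hm2 : m₂ = (r : ℤ) - 1 := by
      rw [hm₂, show (-((n + 1 : ℕ) : ℤ)) = ((r : ℤ) - 1) + (-q - 1) * (r : ℤ) by
        push_cast; rw [hq]; ring,
        Int.add_mul_emod_self_right, Int.emod_eq_of_lt (by omega) (by omega)]
    have htot := sigma_sum r hr b σ hb hσ
    have hsplit : ∑ j ∈ Finset.Icc (1 : ℤ) ((r : ℤ) - 1), σ j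
        = ∑ j ∈ Finset.Icc (1 : ℤ) ((r : ℤ) - 1 - 1), σ j + σ ((r : ℤ) - 1) := by
      rw [IccZ_insert 1 ((r : ℤ) - 1) (by omega),
        Finset.sum_insert (by simp only [Finset.mem_Icc]; omega)]
      ring
    have h2 : ∑ j ∈ Finset.Icc (1 : ℤ) ((r : ℤ) - 1 - 1), σ j
        = ((r : ℚ) ^ 2 - 1) / 12 - σ ((r : ℤ) - 1) := by
      rw [← htot, hsplit]; ring
    unfold fA
    rw [← hm₁, ← hm₂, hm2, hm1z, h2,
      Finset.Icc_eq_empty (by norm_num : ¬(1 : ℤ) ≤ 0 - 1), Finset.sum_empty]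
    push_cast
    field_simp
    ring

/-- Per-singularity content of Altınok's Hilbert series formula.  For `r ≥ 2`, `b` coprime
to `r`, and `σ(i) = [b·i]_r·(r−[b·i]_r)/(2r) ∈ ℚ`, one has in `ℚ⟦t⟧`:
`∑_{n≥0} (−n·(r²−1)/(12r) − [−n]_r·(r²−1)/(12r) + ∑_{j=1}^{[−n]_r−1} σ(j))·tⁿ
   = −(1−t)⁻¹·(1−t^r)⁻¹·∑_{i=1}^{r−1} σ(i)·t^i`. -/
theorem single_singularity_altinok_identity (r : ℕ) (hr : 2 ≤ r) (b : ℤ)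
    (hb : IsCoprime b (r : ℤ))
    (σ : ℤ → ℚ)
    (hσ : ∀ i : ℤ, σ i =
      (((b * i) % (r : ℤ) : ℤ) : ℚ) * ((r : ℚ) - (((b * i) % (r : ℤ) : ℤ) : ℚ)) / (2 * r)) :
    PowerSeries.mk (fun n : ℕ =>
        -(n : ℚ) * ((r : ℚ) ^ 2 - 1) / (12 * r)
          - ((((-(n : ℤ)) % (r : ℤ)) : ℤ) : ℚ) * ((r : ℚ) ^ 2 - 1) / (12 * r)
          + ∑ j ∈ Finset.Icc (1 : ℤ) ((-(n : ℤ)) % (r : ℤ) - 1), σ j)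
      = -((1 - X)⁻¹ * (1 - X ^ r)⁻¹
          * ∑ i ∈ Finset.Icc 1 (r - 1), PowerSeries.C (σ (i : ℤ)) * (X : PowerSeries ℚ) ^ i) := by
  show PowerSeries.mk (fA r σ)
      = -((1 - X)⁻¹ * (1 - X ^ r)⁻¹
          * ∑ i ∈ Finset.Icc 1 (r - 1), PowerSeries.C (σ (i : ℤ)) * (X : PowerSeries ℚ) ^ i)
  set P : PowerSeries ℚ :=
    ∑ i ∈ Finset.Icc 1 (r - 1), PowerSeries.C (σ (i : ℤ)) * (X : PowerSeries ℚ) ^ i with hP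
  set F : PowerSeries ℚ := PowerSeries.mk (fA r σ) with hF
  have hPcoeff : ∀ n : ℕ,
      (coeff n) P = if n ∈ Finset.Icc 1 (r - 1) then σ (n : ℤ) else 0 := by
    intro n
    rw [hP, map_sum, Finset.sum_congr rfl (fun i _ => by rw [coeff_C_mul, coeff_X_pow])]
    simp only [mul_ite, mul_one, mul_zero]
    exact Finset.sum_ite_eq (Finset.Icc 1 (r - 1)) n (fun i => σ (i : ℤ))
  have hkey : (1 - X) * ((1 - X ^ r) * F) = -P := by
    ext n
    rw [show ((1 - X) * ((1 - X ^ r) * F) : PowerSeries ℚ)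
        = F - X ^ 1 * F - X ^ r * F + X ^ (r + 1) * F from by ring,
      map_add, map_sub, map_sub, coeff_X_pow_mul', coeff_X_pow_mul', coeff_X_pow_mul',
      map_neg, hPcoeff, hF]
    simp only [coeff_mk]
    rcases n with _ | n
    · rw [if_neg (by omega : ¬ 1 ≤ 0), if_neg (by omega : ¬ r ≤ 0),
        if_neg (by omega : ¬ r + 1 ≤ 0),
        if_neg (by simp only [Finset.mem_Icc]; omega : ¬ 0 ∈ Finset.Icc 1 (r - 1)),
        fA_zero]
      norm_num
    · by_cases hlt : n + 1 < r
      · rw [if_pos (by omega : 1 ≤ n + 1), if_neg (by omega : ¬ r ≤ n + 1),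
          if_neg (by omega : ¬ r + 1 ≤ n + 1),
          if_pos (by simp only [Finset.mem_Icc]; omega : n + 1 ∈ Finset.Icc 1 (r - 1)),
          show n + 1 - 1 = n from rfl]
        have h1 := fA_diff r hr b hb σ hσ n
        linarith [h1]
      · rw [if_pos (by omega : 1 ≤ n + 1), if_pos (by omega : r ≤ n + 1),
          if_neg (by simp only [Finset.mem_Icc]; omega : ¬ n + 1 ∈ Finset.Icc 1 (r - 1)),
          neg_zero, show n + 1 - 1 = n from rfl]
        by_cases heq : n + 1 = r
        · rw [if_neg (by omega : ¬ r + 1 ≤ n + 1),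
            show n + 1 - r = 0 from by omega, fA_zero]
          have h1 := fA_diff r hr b hb σ hσ n
          have h3 : σ ((n + 1 : ℕ) : ℤ) = 0 := by
            have hmod : ((n + 1 : ℕ) : ℤ) % (r : ℤ) = 0 := by
              rw [show ((n + 1 : ℕ) : ℤ) = (r : ℤ) from by exact_mod_cast heq]
              exact Int.emod_self
            rw [← sigma_emod r b σ hσ, hmod, sigma_zero r b σ hσ]
          rw [h3] at h1
          linarith [h1]
        · rw [if_pos (by omega : r + 1 ≤ n + 1),
            show n + 1 - r = (n - r) + 1 from by omega,
            show n + 1 - (r + 1) = n - r from by omega]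
          have h1 := fA_diff r hr b hb σ hσ n
          have h2 := fA_diff r hr b hb σ hσ (n - r)
          have hper : σ ((n + 1 : ℕ) : ℤ) = σ (((n - r) + 1 : ℕ) : ℤ) := by
            rw [← sigma_emod r b σ hσ ((n + 1 : ℕ) : ℤ),
              ← sigma_emod r b σ hσ (((n - r) + 1 : ℕ) : ℤ)]
            congr 1
            rw [show ((n + 1 : ℕ) : ℤ) = (((n - r) + 1 : ℕ) : ℤ) + 1 * (r : ℤ) from by
              push_cast [Nat.cast_sub (by omega : r ≤ n)]; ring,
              Int.add_mul_emod_self_right]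
          linarith [h1, h2, hper]
  have h1 : constantCoeff ((1 : PowerSeries ℚ) - X) ≠ 0 := by simp
  have h2 : constantCoeff ((1 : PowerSeries ℚ) - X ^ r) ≠ 0 := by
    rw [map_sub, map_one, map_pow, constantCoeff_X, zero_pow (by omega : r ≠ 0)]
    norm_num
  rw [show -((1 - X)⁻¹ * (1 - X ^ r)⁻¹ * P : PowerSeries ℚ)
      = (1 - X)⁻¹ * (1 - X ^ r)⁻¹ * (-P) from by ring, ← hkey,
    show ((1 - X : PowerSeries ℚ)⁻¹ * (1 - X ^ r)⁻¹ * ((1 - X) * ((1 - X ^ r) * F)))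
      = ((1 - X)⁻¹ * (1 - X)) * (((1 - X ^ r)⁻¹ * (1 - X ^ r)) * F) from by ring,
    PowerSeries.inv_mul_cancel _ h1, PowerSeries.inv_mul_cancel _ h2, one_mul, one_mul]
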